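/- Let G be a finite commutative group, H a subgroup of G, and A ⊆ H a standard set. Then Δ(A, G) = [G : H] · Δ(A, H), where for a group K ⊇ A, Δ(A, K) = max{|B| : B ⊆ K, (B−B) ∩ A = {0}}. Equivalently, Δ(A, G)/|G| = Δ(A, H)/|H|, so the measure of intersectivity δ(A) does not depend on the ambient group. -/

import Mathlib

open scoped Pointwise ComplexOrder

noncomputable section

def IsStandard {G : Type*} [AddCommGroup G] (A : Set G) : Prop :=
  A = -A ∧ (0 : G) ∈ A

def Delta {G : Type*} [AddCommGroup G] (A : Set G) : ℕ :=
  sSup {n | ∃ B : Finset G, ((B : Set G) - (B : Set G)) ∩ A = {0} ∧ B.card = n}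

def DeltaBar {G : Type*} [AddCommGroup G] (A : Set G) : ℕ :=
  sSup {n | ∃ B : Finset G, ((B : Set G) - (B : Set G)) ⊆ A ∧ B.card = n}

def deltaL {G : Type*} [AddCommGroup G] [Fintype G] (A : Set G) : ℝ :=
  (Delta A : ℝ) / (Fintype.card G : ℝ)

def deltaU {G : Type*} [AddCommGroup G] (A : Set G) : ℝ :=
  1 / (DeltaBar A : ℝ)

def ftrans {G : Type*} [AddCommGroup G] [Fintype G] (f : G → ℝ) (γ : AddChar G Circle) : ℂ :=
  ∑ x, (γ x : ℂ) * (f x : ℂ)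

def PosFT {G : Type*} [AddCommGroup G] [Fintype G] (f : G → ℝ) : Prop :=
  ∀ γ : AddChar G Circle, 0 ≤ ftrans f γ

def lamSet {G : Type*} [AddCommGroup G] [Fintype G] (S : Set (G → ℝ)) : Set ℝ :=
  {r | ∃ f ∈ S, PosFT f ∧ (∑ x, f x) ≠ 0 ∧ r = f 0 / ∑ x, f x}

def lam {G : Type*} [AddCommGroup G] [Fintype G] (A : Set G) : ℝ :=
  sInf (lamSet {f | f ≠ 0 ∧ ∀ x ∉ A, f x = 0})

def lamMinus {G : Type*} [AddCommGroup G] [Fintype G] (A : Set G) : ℝ :=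
  sInf (lamSet {f | f ≠ 0 ∧ ∀ x ∉ A, f x ≤ 0})

def lamPlus {G : Type*} [AddCommGroup G] [Fintype G] (A : Set G) : ℝ :=
  sInf (lamSet {f | f ≠ 0 ∧ (∀ x ∉ A, f x = 0) ∧ ∀ x ∈ A, 0 ≤ f x})

def lamPM {G : Type*} [AddCommGroup G] [Fintype G] (A : Set G) : ℝ :=
  sInf (lamSet {f | f ≠ 0 ∧ (∀ x ∉ A, f x ≤ 0) ∧ ∀ x ∈ A, 0 ≤ f x})

private theorem stmt5_aux {G : Type*} [AddCommGroup G] [Fintype G]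
    (H : AddSubgroup G) [Fintype H]
    (A : Set H) (hA : A = -A ∧ (0:H) ∈ A) :
    Delta ((Subtype.val '' A : Set G)) = H.index * Delta A := by
  classical
  haveI : Fintype (G ⧸ H) := Fintype.ofFinite _
  set A' : Set G := Subtype.val '' A with hA'
  have h0A : (0 : H) ∈ A := hA.2
  have h0A' : (0 : G) ∈ A' := ⟨0, h0A, rfl⟩
  set SG := {n | ∃ B : Finset G, ((B : Set G) - (B : Set G)) ∩ A' = {0} ∧ B.card = n} with hSG
  set SH := {n | ∃ B : Finset H, ((B : Set H) - (B : Set H)) ∩ A = {0} ∧ B.card = n} with hSH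
  have hbddG : BddAbove SG := ⟨Fintype.card G, by rintro n ⟨B, _, rfl⟩; exact B.card_le_univ⟩
  have hbddH : BddAbove SH := ⟨Fintype.card H, by rintro n ⟨B, _, rfl⟩; exact B.card_le_univ⟩
  have hneG : SG.Nonempty := by
    refine ⟨1, {0}, ?_, by simp⟩
    simp [Set.singleton_sub_singleton, Set.inter_eq_self_of_subset_left,
      Set.singleton_subset_iff, h0A']
  have hneH : SH.Nonempty := by
    refine ⟨1, {0}, ?_, by simp⟩
    simp [Set.singleton_sub_singleton, Set.inter_eq_self_of_subset_left,
      Set.singleton_subset_iff, h0A]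
  have hidx : H.index = Fintype.card (G ⧸ H) := by
    rw [AddSubgroup.index, Nat.card_eq_fintype_card]
  have hDH : Delta A = sSup SH := rfl
  have hDG : Delta A' = sSup SG := rfl
  -- upper bound: any valid B in G has card ≤ index * Delta A
  have hupper : ∀ B : Finset G, ((B : Set G) - (B : Set G)) ∩ A' = {0} →
      B.card ≤ H.index * Delta A := by
    intro B hB
    have hfib : B.card = ∑ q : G ⧸ H,
        (B.filter (fun x => (QuotientAddGroup.mk x : G ⧸ H) = q)).card :=
      Finset.card_eq_sum_card_fiberwise (fun x _ => Finset.mem_univ _)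
    rw [hfib, hidx]
    have : ∀ q : G ⧸ H,
        (B.filter (fun x => (QuotientAddGroup.mk x : G ⧸ H) = q)).card ≤ Delta A := by
      intro q
      set Bq := B.filter (fun x => (QuotientAddGroup.mk x : G ⧸ H) = q) with hBq
      rcases Bq.eq_empty_or_nonempty with h | ⟨x₀, hx₀⟩
      · simp [h]
      have hx₀q : (QuotientAddGroup.mk x₀ : G ⧸ H) = q := (Finset.mem_filter.mp hx₀).2
      have hmem : ∀ x ∈ Bq, x - x₀ ∈ H := by
        intro x hx
        have hxq : (QuotientAddGroup.mk x : G ⧸ H) = QuotientAddGroup.mk x₀ :=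
          (Finset.mem_filter.mp hx).2.trans hx₀q.symm
        have := QuotientAddGroup.eq.mp hxq
        simpa [sub_eq_add_neg, add_comm] using H.neg_mem this
      set B' : Finset H := Bq.attach.image
        (fun x => (⟨x.1 - x₀, hmem x.1 x.2⟩ : H)) with hB'
      have hcard' : B'.card = Bq.card := by
        rw [hB', Finset.card_image_of_injective _ ?_, Finset.card_attach]
        intro a b hab
        have : (a.1 : G) - x₀ = b.1 - x₀ := congrArg Subtype.val hab
        exact Subtype.ext (sub_left_inj.mp this)
      have hcond' : ((B' : Set H) - (B' : Set H)) ∩ A = {0} := by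
        apply Set.eq_singleton_iff_unique_mem.mpr
        constructor
        · refine ⟨?_, h0A⟩
          have he : (⟨x₀ - x₀, hmem x₀ hx₀⟩ : H) ∈ (B' : Set H) := by
            simp only [hB', Finset.coe_image, Set.mem_image]
            exact ⟨⟨x₀, hx₀⟩, by simp, rfl⟩
          exact ⟨_, he, _, he, sub_self _⟩
        · rintro d ⟨⟨u, hu, v, hv, rfl⟩, hdA⟩
          simp only [hB', Finset.coe_image, Set.mem_image] at hu hv
          obtain ⟨⟨x, hx⟩, -, rfl⟩ := hu
          obtain ⟨⟨y, hy⟩, -, rfl⟩ := hv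
          have hxB : x ∈ B := (Finset.mem_filter.mp hx).1
          have hyB : y ∈ B := (Finset.mem_filter.mp hy).1
          have hval : ((⟨x - x₀, hmem x hx⟩ - ⟨y - x₀, hmem y hy⟩ : H) : G) = x - y := by
            push_cast; abel
          have hdG : (x - y : G) ∈ ((B : Set G) - (B : Set G)) ∩ A' := by
            refine ⟨⟨x, hxB, y, hyB, rfl⟩, ?_⟩
            rw [← hval]; exact ⟨_, hdA, rfl⟩
          rw [hB] at hdG
          have : (x - y : G) = 0 := hdG
          exact Subtype.ext (by rw [hval, this]; rfl)
      rw [← hcard', hDH]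
      exact le_csSup hbddH ⟨B', hcond', rfl⟩
    calc ∑ q : G ⧸ H, (B.filter (fun x => (QuotientAddGroup.mk x : G ⧸ H) = q)).card
        ≤ ∑ _q : G ⧸ H, Delta A := Finset.sum_le_sum (fun q _ => this q)
      _ = Fintype.card (G ⧸ H) * Delta A := by
          rw [Finset.sum_const, Finset.card_univ, smul_eq_mul]
  -- lower bound: construct big B in G
  obtain ⟨B₀, hB₀, hB₀card⟩ : ∃ B₀ : Finset H,
      ((B₀ : Set H) - (B₀ : Set H)) ∩ A = {0} ∧ B₀.card = Delta A := by
    have := Nat.sSup_mem hneH hbddH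
    rw [← hDH] at this
    obtain ⟨B₀, h1, h2⟩ := this
    exact ⟨B₀, h1, h2⟩
  set C : Finset G := Finset.univ.biUnion
    (fun q : G ⧸ H => B₀.image (fun (h : H) => (h : G) + q.out)) with hC
  have hmkout : ∀ (q : G ⧸ H) (h : H), (QuotientAddGroup.mk ((h : G) + q.out) : G ⧸ H) = q := by
    intro q h
    rw [QuotientAddGroup.mk_add]
    rw [(QuotientAddGroup.eq_zero_iff (h : G)).mpr h.2, zero_add]
    exact QuotientAddGroup.out_eq' q
  have himg : ∀ q : G ⧸ H, (B₀.image (fun (h : H) => (h : G) + q.out)).card = B₀.card := by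
    intro q
    apply Finset.card_image_of_injective
    intro a b hab
    exact Subtype.ext (by simpa using hab)
  have hCcard : C.card = H.index * Delta A := by
    rw [hC, Finset.card_biUnion]
    · rw [hidx, ← hB₀card]
      rw [Finset.sum_congr rfl (fun q _ => himg q), Finset.sum_const, Finset.card_univ,
        smul_eq_mul]
    · intro q _ q' _ hqq'
      rw [Function.onFun, Finset.disjoint_left]
      rintro x hx hx'
      obtain ⟨h1, -, rfl⟩ := Finset.mem_image.mp hx
      obtain ⟨h2, -, heq⟩ := Finset.mem_image.mp hx'
      apply hqq'
      rw [← hmkout q h1, ← hmkout q' h2, heq]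
  have hCcond : ((C : Set G) - (C : Set G)) ∩ A' = {0} := by
    apply Set.eq_singleton_iff_unique_mem.mpr
    constructor
    · have h0B : (0 : H) ∈ ((B₀ : Set H) - (B₀ : Set H)) ∩ A := hB₀ ▸ rfl
      obtain ⟨⟨b, hb, b', hb', -⟩, -⟩ := h0B
      have hbC : ((b : G) + (0 : G ⧸ H).out) ∈ (C : Set G) := by
        rw [hC]
        simp only [Finset.coe_biUnion, Set.mem_iUnion, Finset.coe_univ, Set.mem_univ,
          Finset.coe_image, Set.mem_image]
        exact ⟨0, trivial, b, hb, rfl⟩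
      exact ⟨⟨_, hbC, _, hbC, sub_self _⟩, h0A'⟩
    · rintro d ⟨⟨u, hu, v, hv, rfl⟩, hdA⟩
      rw [hC] at hu hv
      simp only [Finset.coe_biUnion, Set.mem_iUnion, Finset.coe_univ, Set.mem_univ,
        Finset.coe_image, Set.mem_image] at hu hv
      obtain ⟨q1, -, h1, hh1, rfl⟩ := hu
      obtain ⟨q2, -, h2, hh2, rfl⟩ := hv
      obtain ⟨a, haA, hav⟩ := hdA
      beta_reduce at hav
      have hdH : ((h1 : G) + q1.out) - ((h2 : G) + q2.out) ∈ H := by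
        rw [← hav]; exact a.2
      have hq : q1 = q2 := by
        have := (QuotientAddGroup.eq_zero_iff _).mpr hdH
        rw [QuotientAddGroup.mk_sub, hmkout q1 h1, hmkout q2 h2, sub_eq_zero] at this
        exact this
      subst hq
      have hd : ((h1 : G) + q1.out) - ((h2 : G) + q1.out) = (h1 : G) - h2 := by abel
      have hval : ((h1 - h2 : H) : G) = (h1 : G) - h2 := by push_cast; ring
      have haeq : a = h1 - h2 := Subtype.ext (by rw [hval, ← hd, hav])
      have : a ∈ ((B₀ : Set H) - (B₀ : Set H)) ∩ A :=
        ⟨⟨h1, hh1, h2, hh2, haeq.symm⟩, haA⟩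
      rw [hB₀] at this
      have ha0 : a = 0 := this
      beta_reduce
      rw [← hav, ha0]; simp
  -- combine
  have hle1 : Delta A' ≤ H.index * Delta A := by
    have := Nat.sSup_mem hneG hbddG
    rw [← hDG] at this
    obtain ⟨B, hBc, hBcard⟩ := this
    rw [← hBcard]
    exact hupper B hBc
  have hle2 : H.index * Delta A ≤ Delta A' := by
    rw [hDG, ← hCcard]
    exact le_csSup hbddG ⟨C, hCcond, rfl⟩
  exact le_antisymm hle1 hle2

theorem stmt5 {G : Type*} [AddCommGroup G] [Fintype G]
    (H : AddSubgroup G) [Fintype H]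
    (A : Set H) (hA : IsStandard A) :
    Delta ((Subtype.val '' A : Set G)) = H.index * Delta A ∧
    (Delta ((Subtype.val '' A : Set G)) : ℝ) / (Fintype.card G : ℝ) =
      (Delta A : ℝ) / (Fintype.card H : ℝ) := by
  haveI : Fintype (G ⧸ H) := Fintype.ofFinite _
  have h1 := stmt5_aux H A hA
  refine ⟨h1, ?_⟩
  have hidx0 : (H.index : ℝ) ≠ 0 :=
    Nat.cast_ne_zero.mpr (AddSubgroup.index_ne_zero_of_finite (H := H))
  have hcards : Fintype.card H * H.index = Fintype.card G := by
    rw [← Nat.card_eq_fintype_card, ← Nat.card_eq_fintype_card]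
    exact AddSubgroup.card_mul_index H
  rw [h1, ← hcards]
  push_cast
  rw [mul_comm (Fintype.card H : ℝ) (H.index : ℝ), mul_div_mul_left _ _ hidx0]
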